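/- Theorem 3: Suppose ε = μ0(A) ∈ (0,1) and d > 0, and let t > 1 be the unique solution of t^ε (t−1)^{1−ε}/(t−1+ε) = e^{−d}. Then the compound outage probability for the class {μ : D(μ0‖μ) ≤ d} equals sup{ μ(A) : D(μ0‖μ) ≤ d } = e^{−d} · (t−1)^{ε−1} · t^{1−ε} · ε. -/

import Mathlib

open MeasureTheory Real Filter
open scoped ENNReal

lemma aux_setIntegral_llr_ge {Ω : Type*} [MeasurableSpace Ω] (μ0 μ : Measure Ω)
    [IsProbabilityMeasure μ0] [IsProbabilityMeasure μ]
    (hac : μ0 ≪ μ) (hint : Integrable (llr μ0 μ) μ0)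
    (S : Set Ω) (hS : MeasurableSet S) (hS0 : μ0 S ≠ 0) :
    (μ0 S).toReal * (Real.log (μ0 S).toReal - Real.log (μ S).toReal)
      ≤ ∫ x in S, llr μ0 μ x ∂μ0 := by
  set e := (μ0 S).toReal with he_def
  set m := (μ S).toReal with hm_def
  have hμS : μ S ≠ 0 := fun h => hS0 (hac h)
  have he : 0 < e := ENNReal.toReal_pos hS0 (measure_ne_top _ _)
  have hm : 0 < m := ENNReal.toReal_pos hμS (measure_ne_top _ _)
  have hmeasinv : Measurable fun x => (μ0.rnDeriv μ x)⁻¹ :=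
    (Measure.measurable_rnDeriv μ0 μ).inv
  have hF : ∫⁻ x in S, (μ0.rnDeriv μ x)⁻¹ ∂μ0 ≤ μ S := by
    rw [← setLIntegral_rnDeriv_mul hac hmeasinv.aemeasurable hS]
    calc ∫⁻ x in S, μ0.rnDeriv μ x * (μ0.rnDeriv μ x)⁻¹ ∂μ
        ≤ ∫⁻ _ in S, 1 ∂μ := lintegral_mono fun x => ENNReal.mul_inv_le_one _
      _ = μ S := by simp
  have hFne : ∫⁻ x in S, (μ0.rnDeriv μ x)⁻¹ ∂μ0 ≠ ⊤ :=
    (lt_of_le_of_lt hF (measure_lt_top _ _)).ne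
  set G : Ω → ℝ := fun x => ((μ0.rnDeriv μ x)⁻¹).toReal with hG_def
  have hGint : IntegrableOn G S μ0 :=
    integrable_toReal_of_lintegral_ne_top hmeasinv.aemeasurable hFne
  have hGle : ∫ x in S, G x ∂μ0 ≤ m := by
    rw [hG_def, integral_toReal hmeasinv.aemeasurable (ae_lt_top hmeasinv hFne)]
    exact ENNReal.toReal_mono (measure_ne_top _ _) hF
  have hpt : ∀ᵐ x ∂μ0, (1 + Real.log e - Real.log m) - (e / m) * G x ≤ llr μ0 μ x := by
    filter_upwards [Measure.rnDeriv_pos hac, hac.ae_le (Measure.rnDeriv_lt_top μ0 μ)]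
      with x hpos htop
    have hg : 0 < (μ0.rnDeriv μ x).toReal := ENNReal.toReal_pos hpos.ne' htop.ne
    have hGx : G x = ((μ0.rnDeriv μ x).toReal)⁻¹ := by
      rw [hG_def]; exact ENNReal.toReal_inv _
    set g := (μ0.rnDeriv μ x).toReal with hgd
    have hkey : Real.log (e * g⁻¹ / m) ≤ e * g⁻¹ / m - 1 :=
      Real.log_le_sub_one_of_pos (by positivity)
    have hlog : Real.log (e * g⁻¹ / m) = Real.log e - Real.log g - Real.log m := by
      rw [Real.log_div (by positivity) hm.ne', Real.log_mul he.ne' (by positivity),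
        Real.log_inv]
      ring
    have hllr : llr μ0 μ x = Real.log g := rfl
    rw [hllr, hGx]
    rw [hlog] at hkey
    have : e * g⁻¹ / m = (e / m) * g⁻¹ := by ring
    rw [this] at hkey
    linarith
  have hptS : ∀ᵐ x ∂(μ0.restrict S),
      (1 + Real.log e - Real.log m) - (e / m) * G x ≤ llr μ0 μ x :=
    ae_restrict_of_ae hpt
  have hint1 : Integrable (fun x => (1 + Real.log e - Real.log m) - (e / m) * G x)
      (μ0.restrict S) := (integrable_const _).sub (hGint.const_mul _)
  have hmono : ∫ x in S, ((1 + Real.log e - Real.log m) - (e / m) * G x) ∂μ0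
      ≤ ∫ x in S, llr μ0 μ x ∂μ0 :=
    integral_mono_ae hint1 hint.restrict hptS
  have hval : ∫ x in S, ((1 + Real.log e - Real.log m) - (e / m) * G x) ∂μ0
      = (1 + Real.log e - Real.log m) * e - (e / m) * ∫ x in S, G x ∂μ0 := by
    rw [integral_sub (integrable_const _) (hGint.const_mul _), setIntegral_const,
      integral_const_mul]
    rw [smul_eq_mul, measureReal_def]
    ring
  rw [hval] at hmono
  have hdiv : 0 ≤ e / m := by positivity
  have hcan : e / m * m = e := div_mul_cancel₀ e hm.ne'
  nlinarith [mul_le_mul_of_nonneg_left hGle hdiv]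

open scoped Classical in
/-- Kullback–Leibler divergence `D(μ‖ν)` between measures, valued in `EReal`:
infinite unless `μ ≪ ν` and the log-likelihood ratio is `μ`-integrable. -/
noncomputable def klDiv {Ω : Type*} [MeasurableSpace Ω] (μ ν : Measure Ω) : EReal :=
  if μ ≪ ν ∧ Integrable (llr μ ν) μ then ((∫ ω, llr μ ν ω ∂μ : ℝ) : EReal) else ⊤

set_option maxHeartbeats 1600000 in
/-- Theorem 3: if `ε = μ0(A) ∈ (0,1)`, `d > 0`, and `t > 1` solves
`t^ε(t−1)^{1−ε}/(t−1+ε) = e^{−d}`, then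
`sup{μ(A) : D(μ0‖μ) ≤ d} = e^{−d}·(t−1)^{ε−1}·t^{1−ε}·ε`. -/
theorem stmt_14 {Ω : Type*} [MeasurableSpace Ω] (μ0 : Measure Ω) [IsProbabilityMeasure μ0]
    (A : Set Ω) (hA : MeasurableSet A) (d : ℝ) (hd : 0 < d)
    (he : (μ0 A).toReal ∈ Set.Ioo (0 : ℝ) 1) (t : ℝ) (ht : 1 < t)
    (heq : t ^ (μ0 A).toReal * (t - 1) ^ (1 - (μ0 A).toReal) / (t - 1 + (μ0 A).toReal)
      = Real.exp (-d)) :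
    sSup {q : ℝ | ∃ μ : Measure Ω, IsProbabilityMeasure μ ∧ klDiv μ0 μ ≤ (d : EReal) ∧
        q = (μ A).toReal}
      = Real.exp (-d) * (t - 1) ^ ((μ0 A).toReal - 1) * t ^ (1 - (μ0 A).toReal)
          * (μ0 A).toReal := by
  obtain ⟨he0, he1⟩ := he
  set ε := (μ0 A).toReal with hε_def
  clear_value ε
  have ht0 : (0:ℝ) < t := lt_trans one_pos ht
  have ht1 : (0:ℝ) < t - 1 := by linarith
  have hs0 : (0:ℝ) < t - 1 + ε := by linarith
  -- complement measure
  have hεc : (μ0 Aᶜ).toReal = 1 - ε := by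
    rw [measure_compl hA (measure_ne_top _ _), measure_univ,
      ENNReal.toReal_sub_of_le prob_le_one ENNReal.one_ne_top, ENNReal.toReal_one, hε_def]
  have hε1' : (0:ℝ) < 1 - ε := by linarith
  -- the key logarithmic identity from heq
  have hKEY : Real.log (t - 1 + ε) - ε * Real.log t - (1 - ε) * Real.log (t - 1) = d := by
    have := congrArg Real.log heq
    rw [Real.log_exp, Real.log_div (by positivity) hs0.ne',
      Real.log_mul (by positivity) (by positivity),
      Real.log_rpow ht0, Real.log_rpow ht1] at this
    linarith
  -- the optimal value
  set qs : ℝ := ε * t / (t - 1 + ε) with hqs_def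
  have hqs0 : 0 < qs := by positivity
  have hqsgt : ε < qs := by
    rw [hqs_def, lt_div_iff₀ hs0]
    nlinarith
  have hqs1 : qs < 1 := by
    rw [hqs_def, div_lt_one hs0]
    nlinarith
  have h1qs : 1 - qs = (1 - ε) * (t - 1) / (t - 1 + ε) := by
    rw [hqs_def, eq_div_iff hs0.ne', sub_mul, div_mul_cancel₀ _ hs0.ne']
    ring
  clear_value qs
  -- RHS equals qs
  have hRHS : Real.exp (-d) * (t - 1) ^ (ε - 1) * t ^ (1 - ε) * ε = qs := by
    rw [← heq]
    have h1 : t ^ ε * t ^ (1 - ε) = t := by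
      rw [← Real.rpow_add ht0, show ε + (1 - ε) = 1 by ring, Real.rpow_one]
    have h2 : (t - 1) ^ (1 - ε) * (t - 1) ^ (ε - 1) = 1 := by
      rw [← Real.rpow_add ht1, show (1 - ε) + (ε - 1) = 0 by ring, Real.rpow_zero]
    calc t ^ ε * (t - 1) ^ (1 - ε) / (t - 1 + ε) * (t - 1) ^ (ε - 1) * t ^ (1 - ε) * ε
        = (t ^ ε * t ^ (1 - ε)) * ((t - 1) ^ (1 - ε) * (t - 1) ^ (ε - 1)) * ε
          / (t - 1 + ε) := by ring
      _ = qs := by rw [h1, h2, hqs_def]; ring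
  rw [hRHS]
  -- the binary divergence at qs equals d
  have hlogqs : Real.log qs = Real.log ε + Real.log t - Real.log (t - 1 + ε) := by
    rw [hqs_def, Real.log_div (by positivity) hs0.ne', Real.log_mul he0.ne' ht0.ne']
  have hlog1qs : Real.log (1 - qs)
      = Real.log (1 - ε) + Real.log (t - 1) - Real.log (t - 1 + ε) := by
    rw [h1qs, Real.log_div (by positivity) hs0.ne', Real.log_mul hε1'.ne' ht1.ne']
  have hdq : ε * (Real.log ε - Real.log qs) + (1 - ε) * (Real.log (1 - ε)
      - Real.log (1 - qs)) = d := by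
    rw [hlogqs, hlog1qs]
    linear_combination hKEY
  -- Upper bound
  have hub : ∀ q ∈ {q : ℝ | ∃ μ : Measure Ω, IsProbabilityMeasure μ ∧
      klDiv μ0 μ ≤ (d : EReal) ∧ q = (μ A).toReal}, q ≤ qs := by
    rintro q ⟨μ, hμprob, hkl, rfl⟩
    by_cases hc : μ0 ≪ μ ∧ Integrable (llr μ0 μ) μ0
    · rw [klDiv, if_pos hc] at hkl
      have hdle : ∫ x, llr μ0 μ x ∂μ0 ≤ d := by exact_mod_cast hkl
      obtain ⟨hac, hint⟩ := hc
      have hμA : μ A ≠ 0 := fun h => by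
        have := hac h
        rw [hε_def] at he0
        simp [this] at he0
      have hμAc : μ Aᶜ ≠ 0 := fun h => by
        have := hac h
        rw [this] at hεc
        simp at hεc
        linarith
      set q := (μ A).toReal with hq_def
      have hq0 : 0 < q := ENNReal.toReal_pos hμA (measure_ne_top _ _)
      have hqc : (μ Aᶜ).toReal = 1 - q := by
        rw [measure_compl hA (measure_ne_top _ _), measure_univ,
          ENNReal.toReal_sub_of_le prob_le_one ENNReal.one_ne_top, ENNReal.toReal_one]
      have hq1 : q < 1 := by
        have : 0 < (μ Aᶜ).toReal := ENNReal.toReal_pos hμAc (measure_ne_top _ _)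
        linarith [hqc ▸ this]
      have hμ0A : μ0 A ≠ 0 := by
        intro h
        rw [hε_def, h] at he0
        simp at he0
      have hμ0Ac : μ0 Aᶜ ≠ 0 := by
        intro h
        rw [h] at hεc
        simp at hεc
        linarith
      have hbA := aux_setIntegral_llr_ge μ0 μ hac hint A hA hμ0A
      have hbAc := aux_setIntegral_llr_ge μ0 μ hac hint Aᶜ hA.compl hμ0Ac
      rw [← hε_def, ← hq_def] at hbA
      rw [hεc, hqc] at hbAc
      have hsum : ∫ x in A, llr μ0 μ x ∂μ0 + ∫ x in Aᶜ, llr μ0 μ x ∂μ0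
          = ∫ x, llr μ0 μ x ∂μ0 := integral_add_compl hA hint
      have hcon : ε * (Real.log ε - Real.log q)
          + (1 - ε) * (Real.log (1 - ε) - Real.log (1 - q)) ≤ d := by
        linarith
      -- from hcon and hdq, conclude q ≤ qs via log x ≤ x - 1
      have ht1' : Real.log (q / qs) ≤ q / qs - 1 :=
        Real.log_le_sub_one_of_pos (by positivity)
      have ht2' : Real.log ((1 - q) / (1 - qs)) ≤ (1 - q) / (1 - qs) - 1 :=
        Real.log_le_sub_one_of_pos (div_pos (by linarith) (by linarith))
      rw [Real.log_div hq0.ne' hqs0.ne'] at ht1'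
      rw [Real.log_div (by linarith : (1:ℝ) - q ≠ 0) (by linarith : (1:ℝ) - qs ≠ 0)] at ht2'
      have hpos : 0 ≤ ε * (Real.log q - Real.log qs)
          + (1 - ε) * (Real.log (1 - q) - Real.log (1 - qs)) := by linarith
      have hstep : 0 ≤ ε * (q / qs - 1) + (1 - ε) * ((1 - q) / (1 - qs) - 1) := by
        have m1 := mul_le_mul_of_nonneg_left ht1' he0.le
        have m2 := mul_le_mul_of_nonneg_left ht2' hε1'.le
        linarith
      have hstep2 : 0 ≤ (ε * (q / qs - 1) + (1 - ε) * ((1 - q) / (1 - qs) - 1))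
          * (qs * (1 - qs)) :=
        mul_nonneg hstep (mul_nonneg hqs0.le (by linarith))
      have hexpand : (ε * (q / qs - 1) + (1 - ε) * ((1 - q) / (1 - qs) - 1))
          * (qs * (1 - qs)) = (q - qs) * (ε - qs) := by
        have h1 : qs ≠ 0 := hqs0.ne'
        have h2 : (1:ℝ) - qs ≠ 0 := by linarith
        field_simp
        ring
      rw [hexpand] at hstep2
      nlinarith
    · rw [klDiv, if_neg hc] at hkl
      exact absurd (top_le_iff.mp hkl) (EReal.coe_ne_top d)
  -- Lower bound: the extremal measure
  set aR : ℝ := t / (t - 1 + ε) with haR_def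
  set bR : ℝ := (t - 1) / (t - 1 + ε) with hbR_def
  have haR : 0 < aR := by rw [haR_def]; positivity
  have hbR : 0 < bR := by rw [hbR_def]; positivity
  clear_value aR bR
  set μstar : Measure Ω := ENNReal.ofReal aR • μ0.restrict A
      + ENNReal.ofReal bR • μ0.restrict Aᶜ with hμstar_def
  clear_value μstar
  have hμ0A_eq : μ0 A = ENNReal.ofReal ε := by
    rw [hε_def]; exact (ENNReal.ofReal_toReal (measure_ne_top _ _)).symm
  have hμ0Ac_eq : μ0 Aᶜ = ENNReal.ofReal (1 - ε) := by
    rw [← hεc]; exact (ENNReal.ofReal_toReal (measure_ne_top _ _)).symm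
  have happly : ∀ S : Set Ω, MeasurableSet S → μstar S
      = ENNReal.ofReal aR * μ0 (S ∩ A) + ENNReal.ofReal bR * μ0 (S ∩ Aᶜ) := by
    intro S hSm
    rw [hμstar_def, Measure.add_apply, Measure.smul_apply, Measure.smul_apply,
      Measure.restrict_apply hSm, Measure.restrict_apply hSm, smul_eq_mul, smul_eq_mul]
  have hprob : IsProbabilityMeasure μstar := by
    constructor
    rw [happly Set.univ MeasurableSet.univ, Set.univ_inter, Set.univ_inter,
      hμ0A_eq, hμ0Ac_eq, ← ENNReal.ofReal_mul haR.le, ← ENNReal.ofReal_mul hbR.le,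
      ← ENNReal.ofReal_add (mul_nonneg haR.le he0.le) (mul_nonneg hbR.le hε1'.le)]
    rw [show aR * ε + bR * (1 - ε) = 1 by
      rw [haR_def, hbR_def, div_mul_eq_mul_div, div_mul_eq_mul_div, ← add_div,
        div_eq_one_iff_eq hs0.ne']
      ring]
    exact ENNReal.ofReal_one
  haveI := hprob
  set h : Ω → ℝ≥0∞ := A.indicator (fun _ => ENNReal.ofReal aR⁻¹)
      + Aᶜ.indicator (fun _ => ENNReal.ofReal bR⁻¹) with hh_def
  clear_value h
  have hhmeas : Measurable h := by
    rw [hh_def]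
    exact (measurable_const.indicator hA).add (measurable_const.indicator hA.compl)
  have hwd : μ0 = μstar.withDensity h := by
    ext S hSm
    rw [withDensity_apply h hSm, hμstar_def, Measure.restrict_add,
      Measure.restrict_smul, Measure.restrict_smul, lintegral_add_measure,
      lintegral_smul_measure, lintegral_smul_measure,
      Measure.restrict_restrict hSm, Measure.restrict_restrict hSm]
    have hpt1 : ∀ x ∈ S ∩ A, h x = ENNReal.ofReal aR⁻¹ := by
      intro x hx
      rw [hh_def]
      simp only [Pi.add_apply]
      rw [Set.indicator_of_mem hx.2, Set.indicator_of_notMem (Set.notMem_compl_iff.mpr hx.2), add_zero]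
    have hpt2 : ∀ x ∈ S ∩ Aᶜ, h x = ENNReal.ofReal bR⁻¹ := by
      intro x hx
      rw [hh_def]
      simp only [Pi.add_apply]
      rw [Set.indicator_of_mem hx.2, Set.indicator_of_notMem hx.2, zero_add]
    have hc1 : ∫⁻ x in S ∩ A, h x ∂μ0 = ENNReal.ofReal aR⁻¹ * μ0 (S ∩ A) := by
      rw [setLIntegral_congr_fun (hSm.inter hA) (show Set.EqOn h (fun _ => ENNReal.ofReal aR⁻¹) (S ∩ A) from hpt1), setLIntegral_const]
    have hc2 : ∫⁻ x in S ∩ Aᶜ, h x ∂μ0 = ENNReal.ofReal bR⁻¹ * μ0 (S ∩ Aᶜ) := by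
      rw [setLIntegral_congr_fun (hSm.inter hA.compl) (show Set.EqOn h (fun _ => ENNReal.ofReal bR⁻¹) (S ∩ Aᶜ) from hpt2), setLIntegral_const]
    rw [hc1, hc2, smul_eq_mul, smul_eq_mul, ← mul_assoc, ← mul_assoc, ← ENNReal.ofReal_mul haR.le,
      ← ENNReal.ofReal_mul hbR.le, mul_inv_cancel₀ haR.ne', mul_inv_cancel₀ hbR.ne',
      ENNReal.ofReal_one, one_mul, one_mul]
    rw [Set.inter_comm S Aᶜ, ← Set.diff_eq_compl_inter]
    exact (measure_inter_add_diff S hA).symm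
  have hac : μ0 ≪ μstar := by
    rw [hwd]; exact withDensity_absolutelyContinuous μstar h
  have hrn : μ0.rnDeriv μstar =ᵐ[μstar] h := by
    nth_rewrite 1 [hwd]
    exact Measure.rnDeriv_withDensity μstar hhmeas
  have hrn0 : μ0.rnDeriv μstar =ᵐ[μ0] h := hac.ae_le hrn
  set ψ : Ω → ℝ := (fun x => A.indicator (fun _ => -Real.log aR) x
      + Aᶜ.indicator (fun _ => -Real.log bR) x) with hψ_def
  clear_value ψ
  have hllr : llr μ0 μstar =ᵐ[μ0] ψ := by
    filter_upwards [hrn0] with x hx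
    rw [llr_def]
    simp only
    rw [hx, hψ_def, hh_def]
    by_cases hxA : x ∈ A
    · simp only [Pi.add_apply]
      rw [Set.indicator_of_mem hxA, Set.indicator_of_notMem (Set.notMem_compl_iff.mpr hxA),
        Set.indicator_of_mem hxA, Set.indicator_of_notMem (Set.notMem_compl_iff.mpr hxA),
        add_zero, add_zero, ENNReal.toReal_ofReal (inv_nonneg.mpr haR.le), Real.log_inv]
    · simp only [Pi.add_apply]
      rw [Set.indicator_of_notMem hxA, Set.indicator_of_mem (Set.mem_compl hxA),
        Set.indicator_of_notMem hxA, Set.indicator_of_mem (Set.mem_compl hxA),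
        zero_add, zero_add, ENNReal.toReal_ofReal (inv_nonneg.mpr hbR.le), Real.log_inv]
  have hψint : Integrable ψ μ0 := by
    rw [hψ_def]
    exact ((integrable_const _).indicator hA).add ((integrable_const _).indicator hA.compl)
  have hint : Integrable (llr μ0 μstar) μ0 := (integrable_congr hllr).mpr hψint
  have hintval : ∫ x, llr μ0 μstar x ∂μ0 = d := by
    rw [integral_congr_ae hllr, hψ_def]
    rw [integral_add ((integrable_const _).indicator hA)
      ((integrable_const _).indicator hA.compl),
      integral_indicator_const _ hA, integral_indicator_const _ hA.compl,
      measureReal_def, measureReal_def, ← hε_def, hεc, smul_eq_mul, smul_eq_mul]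
    have hla : Real.log aR = Real.log t - Real.log (t - 1 + ε) := by
      rw [haR_def, Real.log_div ht0.ne' hs0.ne']
    have hlb : Real.log bR = Real.log (t - 1) - Real.log (t - 1 + ε) := by
      rw [hbR_def, Real.log_div ht1.ne' hs0.ne']
    rw [hla, hlb]
    linear_combination hKEY
  have hklstar : klDiv μ0 μstar ≤ (d : EReal) := by
    rw [klDiv, if_pos ⟨hac, hint⟩, hintval]
  have hmem : qs ∈ {q : ℝ | ∃ μ : Measure Ω, IsProbabilityMeasure μ ∧
      klDiv μ0 μ ≤ (d : EReal) ∧ q = (μ A).toReal} := by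
    refine ⟨μstar, hprob, hklstar, ?_⟩
    rw [happly A hA, Set.inter_self, Set.inter_compl_self, measure_empty, mul_zero,
      add_zero, hμ0A_eq, ← ENNReal.ofReal_mul haR.le,
      ENNReal.toReal_ofReal (by positivity), hqs_def, haR_def]
    ring
  exact le_antisymm (Real.sSup_le hub hqs0.le) (le_csSup ⟨qs, hub⟩ hmem)
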